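/- If a Boolean algebra A contains a subalgebra isomorphic to the Cantor algebra, then there exist Boolean homomorphisms φ_n : A → M (n ∈ ω) and φ : A → M such that (φ_n) converges pointwise to φ but does not converge uniformly. -/

import Mathlib

open MeasureTheory Set Filter Topology
open scoped symmDiff ENNReal

noncomputable section

universe u v

/-- The two-element set `{0,1}`, as an additive group (addition mod 2) with the
discrete topology. -/
inductive Two : Type
  | zero
  | one
  deriving DecidableEq

instance : Fintype Two := ⟨{Two.zero, Two.one}, fun x => by cases x <;> decide⟩

instance : Zero Two := ⟨Two.zero⟩
instance : One Two := ⟨Two.one⟩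

/-- Addition modulo 2 on `{0,1}`. -/
def Two.add : Two → Two → Two
  | Two.zero, x => x
  | Two.one, Two.zero => Two.one
  | Two.one, Two.one => Two.zero

instance : Add Two := ⟨Two.add⟩
instance : Neg Two := ⟨fun x => x⟩

instance : AddCommGroup Two where
  add := (· + ·)
  zero := Two.zero
  neg := (- ·)
  add_assoc := by decide
  zero_add := by decide
  add_zero := by decide
  neg_add_cancel := by decide
  add_comm := by decide
  nsmul := nsmulRec
  zsmul := zsmulRec

instance : TopologicalSpace Two := ⊥
instance : DiscreteTopology Two := ⟨rfl⟩

instance : IsTopologicalAddGroup Two where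
  continuous_add := continuous_of_discreteTopology
  continuous_neg := continuous_of_discreteTopology

/-- The Cantor cube `{0,1}^κ`, with the product topology. -/
abbrev Cube (κ : Type u) : Type u := κ → Two

instance (κ : Type u) : MeasurableSpace (Cube κ) := borel _

instance (κ : Type u) : BorelSpace (Cube κ) := ⟨rfl⟩

/-- The fair-coin product measure `λ_κ` on `{0,1}^κ`: the Haar measure of the compact
group `{0,1}^κ`, normalized so that the whole space has measure `1`. -/
def lam (κ : Type u) : Measure (Cube κ) :=
  Measure.addHaarMeasure ⟨⟨Set.univ, isCompact_univ⟩, by simpa using Set.univ_nonempty⟩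

/-- The Boolean algebra of measurable subsets of `X`. -/
abbrev MSet (X : Type u) [MeasurableSpace X] : Type u := {s : Set X // MeasurableSet s}

/-- The ideal of `μ`-null sets in the Boolean ring of measurable subsets of `X`. -/
def nullIdeal {X : Type u} [MeasurableSpace X] (μ : Measure X) :
    Ideal (AsBoolRing (MSet X)) where
  carrier := {s | μ (ofBoolRing s : MSet X).1 = 0}
  zero_mem' := by
    show μ (ofBoolRing (0 : AsBoolRing (MSet X)) : MSet X).1 = 0
    rw [ofBoolRing_zero]
    simpa using measure_empty (μ := μ)
  add_mem' := by
    intro a b ha hb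
    show μ (ofBoolRing (a + b) : MSet X).1 = 0
    rw [ofBoolRing_add]
    refine le_antisymm ?_ zero_le
    calc μ ((ofBoolRing a ∆ ofBoolRing b : MSet X) : Set X)
        ≤ μ (((ofBoolRing a : MSet X) : Set X) ∪ ((ofBoolRing b : MSet X) : Set X)) := by
          refine measure_mono ?_
          simp only [symmDiff_def, MeasurableSet.sup_eq_union, MeasurableSet.coe_union,
            MeasurableSet.coe_sdiff]
          exact Set.union_subset_union Set.diff_subset Set.diff_subset
      _ ≤ μ ((ofBoolRing a : MSet X) : Set X) + μ ((ofBoolRing b : MSet X) : Set X) :=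
          measure_union_le _ _
      _ = 0 := by rw [ha, hb, add_zero]
  smul_mem' := by
    intro c x hx
    show μ (ofBoolRing (c * x) : MSet X).1 = 0
    rw [ofBoolRing_mul]
    refine le_antisymm ?_ zero_le
    calc μ ((ofBoolRing c ⊓ ofBoolRing x : MSet X) : Set X)
        ≤ μ ((ofBoolRing x : MSet X) : Set X) := by
          refine measure_mono ?_
          simp only [MeasurableSet.inf_eq_inter, MeasurableSet.coe_inter]
          exact Set.inter_subset_right
      _ = 0 := hx

instance {X : Type u} [MeasurableSpace X] (μ : Measure X) :
    BooleanRing (AsBoolRing (MSet X) ⧸ nullIdeal μ) where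
  isIdempotentElem a := by
    show _ * _ = _
    obtain ⟨x, rfl⟩ := Ideal.Quotient.mk_surjective a
    rw [← map_mul]
    exact congrArg _ (BooleanRing.mul_self x)

/-- The measure algebra of the measure `μ`: measurable sets modulo `μ`-null sets,
as a Boolean algebra.  For `μ = lam κ` this is the measure algebra `M_κ`. -/
abbrev MAlg (X : Type u) [MeasurableSpace X] (μ : Measure X) : Type u :=
  AsBoolAlg (AsBoolRing (MSet X) ⧸ nullIdeal μ)

/-- The class of a measurable set in the measure algebra. -/
def MAlg.mk {X : Type u} [MeasurableSpace X] (μ : Measure X) (s : MSet X) : MAlg X μ :=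
  toBoolAlg (Ideal.Quotient.mk (nullIdeal μ) (toBoolRing s))

/-- The measure induced by `μ` on its measure algebra `MAlg X μ` (with real values). -/
def mval {X : Type u} [MeasurableSpace X] (μ : Measure X) (a : MAlg X μ) : ℝ :=
  Quotient.liftOn' (ofBoolAlg a) (fun s => (μ (ofBoolRing s : MSet X).1).toReal)
    (by
      intro s t h
      have hst : s - t ∈ nullIdeal μ := by
        rwa [Submodule.quotientRel_def] at h
      have h0 : μ (((ofBoolRing s : MSet X) : Set X) ∆ ((ofBoolRing t : MSet X) : Set X)) = 0 := by
        have hn : μ ((ofBoolRing (s - t) : MSet X) : Set X) = 0 := hst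
        rw [ofBoolRing_sub] at hn
        simpa only [symmDiff_def, MeasurableSet.sup_eq_union, MeasurableSet.coe_union,
          MeasurableSet.coe_sdiff, Set.sup_eq_union] using hn
      have hc := measure_congr (μ := μ) (MeasureTheory.measure_symmDiff_eq_zero_iff.mp h0)
      simp only [hc])

/-! ### Auxiliary API for the measure algebra -/

namespace MAlgAux

variable {X : Type u} [MeasurableSpace X] (μ : Measure X)

lemma coe_symmDiff (s t : MSet X) : ((s ∆ t : MSet X) : Set X) = (s : Set X) ∆ (t : Set X) := by
  simp [symmDiff_def]

/-- `MAlg.mk` as a bounded lattice homomorphism. -/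
def mkHom : BoundedLatticeHom (MSet X) (MAlg X μ) where
  toFun := MAlg.mk μ
  map_sup' s t := by
    show ((Ideal.Quotient.mk (nullIdeal μ)).asBoolAlg)
        ((OrderIso.asBoolAlgAsBoolRing (MSet X)).symm (s ⊔ t)) = _
    rw [(OrderIso.asBoolAlgAsBoolRing (MSet X)).symm.map_sup,
      SupHomClass.map_sup ((Ideal.Quotient.mk (nullIdeal μ)).asBoolAlg)]
    rfl
  map_inf' s t := by
    show ((Ideal.Quotient.mk (nullIdeal μ)).asBoolAlg)
        ((OrderIso.asBoolAlgAsBoolRing (MSet X)).symm (s ⊓ t)) = _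
    rw [(OrderIso.asBoolAlgAsBoolRing (MSet X)).symm.map_inf,
      InfHomClass.map_inf ((Ideal.Quotient.mk (nullIdeal μ)).asBoolAlg)]
    rfl
  map_top' := by
    show ((Ideal.Quotient.mk (nullIdeal μ)).asBoolAlg)
        ((OrderIso.asBoolAlgAsBoolRing (MSet X)).symm ⊤) = _
    rw [OrderIso.map_top, TopHomClass.map_top ((Ideal.Quotient.mk (nullIdeal μ)).asBoolAlg)]
  map_bot' := by
    show ((Ideal.Quotient.mk (nullIdeal μ)).asBoolAlg)
        ((OrderIso.asBoolAlgAsBoolRing (MSet X)).symm ⊥) = _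
    rw [OrderIso.map_bot, BotHomClass.map_bot ((Ideal.Quotient.mk (nullIdeal μ)).asBoolAlg)]

@[simp] lemma mkHom_apply (s : MSet X) : mkHom μ s = MAlg.mk μ s := rfl

lemma mk_sup (s t : MSet X) : MAlg.mk μ (s ⊔ t) = MAlg.mk μ s ⊔ MAlg.mk μ t :=
  SupHomClass.map_sup (mkHom μ) s t

lemma mk_inf (s t : MSet X) : MAlg.mk μ (s ⊓ t) = MAlg.mk μ s ⊓ MAlg.mk μ t :=
  InfHomClass.map_inf (mkHom μ) s t

lemma mk_compl (s : MSet X) : MAlg.mk μ sᶜ = (MAlg.mk μ s)ᶜ :=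
  map_compl' (mkHom μ) s

lemma mk_symmDiff (s t : MSet X) : MAlg.mk μ (s ∆ t) = MAlg.mk μ s ∆ MAlg.mk μ t :=
  map_symmDiff' (mkHom μ) s t

lemma mk_bot : MAlg.mk μ (⊥ : MSet X) = ⊥ := BotHomClass.map_bot (mkHom μ)

lemma mk_top : MAlg.mk μ (⊤ : MSet X) = ⊤ := TopHomClass.map_top (mkHom μ)

lemma mk_surjective : Function.Surjective (MAlg.mk μ) := by
  intro x
  obtain ⟨r, hr⟩ := Ideal.Quotient.mk_surjective (ofBoolAlg x)
  refine ⟨ofBoolRing r, ?_⟩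
  show toBoolAlg (Ideal.Quotient.mk (nullIdeal μ) (toBoolRing (ofBoolRing r))) = x
  rw [toBoolRing_ofBoolRing, hr, toBoolAlg_ofBoolAlg]

lemma mk_eq_mk_iff {s t : MSet X} :
    MAlg.mk μ s = MAlg.mk μ t ↔ μ ((s : Set X) ∆ (t : Set X)) = 0 := by
  unfold MAlg.mk
  rw [toBoolAlg_inj, Ideal.Quotient.eq]
  have : toBoolRing s - toBoolRing t ∈ nullIdeal μ ↔
      μ ((ofBoolRing (toBoolRing s - toBoolRing t) : MSet X) : Set X) = 0 := Iff.rfl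
  rw [this, ofBoolRing_sub, ofBoolRing_toBoolRing, ofBoolRing_toBoolRing, coe_symmDiff]

lemma mval_mk (s : MSet X) : mval μ (MAlg.mk μ s) = (μ (s : Set X)).toReal := by
  show Quotient.liftOn' (ofBoolAlg (toBoolAlg (Ideal.Quotient.mk (nullIdeal μ) (toBoolRing s))))
      _ _ = _
  rw [ofBoolAlg_toBoolAlg]
  show (μ ((ofBoolRing (toBoolRing s) : MSet X) : Set X)).toReal = _
  rw [ofBoolRing_toBoolRing]

lemma mk_le_mk_iff {s t : MSet X} :
    MAlg.mk μ s ≤ MAlg.mk μ t ↔ μ ((s : Set X) \ (t : Set X)) = 0 := by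
  rw [← sup_eq_right, ← mk_sup, mk_eq_mk_iff]
  have : (((s ⊔ t : MSet X)) : Set X) ∆ (t : Set X) = (s : Set X) \ (t : Set X) := by
    ext x
    simp [Set.mem_symmDiff]
    tauto
  rw [this]

end MAlgAux
namespace MAlgAux

variable {X : Type u} [MeasurableSpace X] (μ : Measure X) [IsFiniteMeasure μ]

lemma mk_mono {s t : MSet X} (h : (s : Set X) ⊆ (t : Set X)) : MAlg.mk μ s ≤ MAlg.mk μ t := by
  rw [mk_le_mk_iff]
  simp [Set.diff_eq_empty.2 h]

lemma mval_nonneg (x : MAlg X μ) : 0 ≤ mval μ x := by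
  obtain ⟨s, rfl⟩ := mk_surjective μ x
  rw [mval_mk]
  exact ENNReal.toReal_nonneg

lemma mval_mono {x y : MAlg X μ} (h : x ≤ y) : mval μ x ≤ mval μ y := by
  obtain ⟨s, rfl⟩ := mk_surjective μ x
  obtain ⟨t, rfl⟩ := mk_surjective μ y
  rw [mk_le_mk_iff] at h
  rw [mval_mk, mval_mk]
  refine ENNReal.toReal_mono (measure_ne_top μ _) ?_
  calc μ (s : Set X) ≤ μ (((s : Set X) ∩ t) ∪ ((s : Set X) \ t)) := by
        refine measure_mono ?_
        intro x hx
        by_cases hxt : x ∈ (t : Set X) <;> simp [hx, hxt]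
    _ ≤ μ ((s : Set X) ∩ t) + μ ((s : Set X) \ t) := measure_union_le _ _
    _ = μ ((s : Set X) ∩ t) := by rw [h, add_zero]
    _ ≤ μ t := measure_mono Set.inter_subset_right

lemma eq_of_le_of_mval_le {x y : MAlg X μ} (h : x ≤ y) (h2 : mval μ y ≤ mval μ x) : x = y := by
  obtain ⟨s, rfl⟩ := mk_surjective μ x
  obtain ⟨t, rfl⟩ := mk_surjective μ y
  have hle := mk_le_mk_iff μ |>.1 h
  rw [mval_mk, mval_mk] at h2
  have hst : μ (t : Set X) ≤ μ (s : Set X) :=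
    (ENNReal.toReal_le_toReal (measure_ne_top μ _) (measure_ne_top μ _)).1 h2
  have hs' : μ (s : Set X) ≤ μ (t : Set X) := by
    calc μ (s : Set X) ≤ μ (((s : Set X) ∩ t) ∪ ((s : Set X) \ t)) := by
          refine measure_mono ?_
          intro x hx
          by_cases hxt : x ∈ (t : Set X) <;> simp [hx, hxt]
      _ ≤ μ ((s : Set X) ∩ t) + μ ((s : Set X) \ t) := measure_union_le _ _
      _ = μ ((s : Set X) ∩ t) := by rw [hle, add_zero]
      _ ≤ μ t := measure_mono Set.inter_subset_right
  have heq : μ (s : Set X) = μ (t : Set X) := le_antisymm hs' hst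
  -- conclude μ (t \ s) = 0
  have h1 : μ ((t : Set X) ∩ s) + μ ((t : Set X) \ s) = μ (t : Set X) :=
    measure_inter_add_diff _ s.2
  have h2' : μ ((s : Set X) ∩ t) + μ ((s : Set X) \ t) = μ (s : Set X) :=
    measure_inter_add_diff _ t.2
  rw [hle, add_zero] at h2'
  have hts : μ ((t : Set X) \ s) = 0 := by
    have hint : μ ((t : Set X) ∩ s) = μ (t : Set X) := by
      rw [Set.inter_comm, h2', heq]
    rw [hint] at h1
    have := (ENNReal.add_right_inj (measure_ne_top μ _)).1
      (by rw [add_zero]; exact h1 : μ (t : Set X) + μ ((t : Set X) \ s) = μ (t : Set X) + 0)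
    exact this
  rw [mk_eq_mk_iff]
  have : (s : Set X) ∆ (t : Set X) = ((s : Set X) \ t) ∪ ((t : Set X) \ s) := rfl
  rw [this]
  refine le_antisymm ?_ zero_le
  calc μ _ ≤ μ ((s : Set X) \ t) + μ ((t : Set X) \ s) := measure_union_le _ _
    _ = 0 := by rw [hle, hts, add_zero]

lemma toReal_measure_iUnion_le {s : ℕ → Set X} (hs : ∀ k, MeasurableSet (s k))
    (hmono : Monotone s) {t : ℝ} (ht : 0 ≤ t) (h : ∀ k, (μ (s k)).toReal ≤ t) :
    (μ (⋃ k, s k)).toReal ≤ t := by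
  rw [hmono.directed_le.measure_iUnion]
  refine ENNReal.toReal_le_of_le_ofReal ht (iSup_le fun k => ?_)
  rw [← ENNReal.ofReal_toReal (measure_ne_top μ (s k))]
  exact ENNReal.ofReal_le_ofReal (h k)

lemma mk_union {s t : Set X} (hs : MeasurableSet s) (ht : MeasurableSet t) :
    MAlg.mk μ ⟨s ∪ t, hs.union ht⟩ = MAlg.mk μ ⟨s, hs⟩ ⊔ MAlg.mk μ ⟨t, ht⟩ := by
  rw [← mk_sup]
  congr 1

theorem exists_isLUB (S : Set (MAlg X μ)) : ∃ m, IsLUB S m := by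
  rcases S.eq_empty_or_nonempty with rfl | ⟨c0, hc0⟩
  · exact ⟨⊥, isLUB_empty⟩
  classical
  set J : Set (MAlg X μ) := {x | ∃ F : Finset (MAlg X μ), ↑F ⊆ S ∧ x = F.sup id} with hJ
  have hJsup : ∀ x ∈ J, ∀ y ∈ J, x ⊔ y ∈ J := by
    rintro x ⟨F, hF, rfl⟩ y ⟨G, hG, rfl⟩
    exact ⟨F ∪ G, by simp [Finset.coe_union, Set.union_subset_iff, hF, hG],
      (Finset.sup_union).symm⟩
  have hJle : ∀ u, u ∈ upperBounds S → ∀ x ∈ J, x ≤ u := by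
    rintro u hu x ⟨F, hF, rfl⟩
    exact Finset.sup_le fun b hb => hu (hF hb)
  set T : Set ℝ := mval μ '' J with hT
  have hTne : T.Nonempty := ⟨mval μ c0, ⟨c0, ⟨{c0}, by simpa using hc0, by simp⟩, rfl⟩⟩
  have hTbdd : BddAbove T := by
    refine ⟨mval μ ⊤, ?_⟩
    rintro r ⟨x, _, rfl⟩
    exact mval_mono μ le_top
  set t : ℝ := sSup T with htdef
  have ht0 : 0 ≤ t := by
    obtain ⟨r, ⟨x, _, rfl⟩⟩ := hTne
    exact le_trans (mval_nonneg μ x) (le_csSup hTbdd ⟨x, ‹_›, rfl⟩)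
  -- choose approximating sequence
  have hex : ∀ k : ℕ, ∃ x ∈ J, t - 1 / (k + 1) < mval μ x := by
    intro k
    have h1 : t - 1 / (k + 1 : ℝ) < t := by
      have : (0:ℝ) < 1 / (k + 1) := by positivity
      linarith
    obtain ⟨r, hrT, hr⟩ := exists_lt_of_lt_csSup hTne h1
    obtain ⟨x, hxJ, rfl⟩ := hrT
    exact ⟨x, hxJ, hr⟩
  choose f hfJ hfval using hex
  -- monotone partial sups
  set z : ℕ → MAlg X μ := fun k => Nat.rec (f 0) (fun k zk => zk ⊔ f (k + 1)) k with hz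
  have hz0 : z 0 = f 0 := rfl
  have hzsucc : ∀ k, z (k + 1) = z k ⊔ f (k + 1) := fun k => rfl
  have hzJ : ∀ k, z k ∈ J := by
    intro k; induction k with
    | zero => exact hfJ 0
    | succ k ih => rw [hzsucc]; exact hJsup _ ih _ (hfJ (k + 1))
  have hzmono : Monotone z := monotone_nat_of_le_succ fun k => by rw [hzsucc]; exact le_sup_left
  have hfz : ∀ k, f k ≤ z k := by
    intro k; cases k with
    | zero => exact le_rfl
    | succ k => rw [hzsucc]; exact le_sup_right
  have hzT : ∀ k, mval μ (z k) ≤ t := fun k => le_csSup hTbdd ⟨z k, hzJ k, rfl⟩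
  have hztlow : ∀ k, t - 1 / (k + 1) < mval μ (z k) :=
    fun k => lt_of_lt_of_le (hfval k) (mval_mono μ (hfz k))
  -- representatives
  have hrep : ∀ k, ∃ s : MSet X, MAlg.mk μ s = z k := fun k => mk_surjective μ (z k)
  choose g hg using hrep
  set gs : ℕ → Set X := fun k => (g k : Set X) with hgs
  have hgm : ∀ k, MeasurableSet (gs k) := fun k => (g k).2
  set acc : ℕ → Set X := fun k => Set.accumulate gs k with hacc
  have haccm : ∀ k, MeasurableSet (acc k) := fun k =>
    MeasurableSet.biUnion (Set.to_countable _) (fun j _ => hgm j)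
  have haccmk : ∀ k, MAlg.mk μ ⟨acc k, haccm k⟩ = z k := by
    intro k; induction k with
    | zero =>
      have : acc 0 = gs 0 := by
        simp [hacc, Set.accumulate_def]
      rw [show (⟨acc 0, haccm 0⟩ : MSet X) = g 0 from Subtype.ext this, hg]
    | succ k ih =>
      have hstep : acc (k + 1) = acc k ∪ gs (k + 1) := by
        ext p
        simp only [hacc, Set.mem_accumulate, Set.mem_union, Nat.le_add_one_iff]
        constructor
        · rintro ⟨y, hy | rfl, hp⟩
          · exact Or.inl ⟨y, hy, hp⟩
          · exact Or.inr hp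
        · rintro (⟨y, hy, hp⟩ | hp)
          · exact ⟨y, Or.inl hy, hp⟩
          · exact ⟨k + 1, Or.inr rfl, hp⟩
      rw [show (⟨acc (k+1), haccm (k+1)⟩ : MSet X)
          = ⟨acc k ∪ gs (k+1), (haccm k).union (hgm (k+1))⟩ from Subtype.ext hstep,
        mk_union μ (haccm k) (hgm (k+1)), ih]
      rw [show MAlg.mk μ ⟨gs (k+1), hgm (k+1)⟩ = z (k+1) from by
        rw [show (⟨gs (k+1), hgm (k+1)⟩ : MSet X) = g (k+1) from Subtype.ext rfl, hg]]
      exact sup_eq_right.2 (hzmono (Nat.le_succ k))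
  set bigU : Set X := ⋃ k, gs k with hbigU
  have hbigUm : MeasurableSet bigU := MeasurableSet.iUnion hgm
  set m : MAlg X μ := MAlg.mk μ ⟨bigU, hbigUm⟩ with hm
  have haccU : (⋃ k, acc k) = bigU := Set.iUnion_accumulate
  have hzm : ∀ k, z k ≤ m := by
    intro k
    rw [← hg k, hm]
    exact mk_mono μ (Set.subset_iUnion gs k)
  -- mval m ≤ t
  have hmval_le : mval μ m ≤ t := by
    rw [hm, mval_mk]
    have : (μ bigU).toReal ≤ t := by
      rw [← haccU]
      refine toReal_measure_iUnion_le μ haccm (Set.monotone_accumulate) ht0 ?_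
      intro k
      rw [← mval_mk μ ⟨acc k, haccm k⟩, haccmk k]
      exact hzT k
    exact this
  have hmval_ge : t ≤ mval μ m := by
    refine le_of_forall_sub_le ?_
    intro ε hε
    obtain ⟨k, hk⟩ := exists_nat_one_div_lt hε
    have h1 := hztlow k
    have h2 := mval_mono μ (hzm k)
    have : (1 : ℝ) / (k + 1) < ε := by exact_mod_cast hk
    linarith
  refine ⟨m, ?_, ?_⟩
  · -- upper bound
    intro c hc
    obtain ⟨w, hw⟩ := mk_surjective μ c
    have hcm : c ⊔ m = m := by
      have hle : m ≤ c ⊔ m := le_sup_right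
      have : mval μ (c ⊔ m) ≤ t := by
        rw [← hw, hm, ← mk_union]
        rw [mval_mk]
        have hUeq : (w : Set X) ∪ bigU = ⋃ k, ((w : Set X) ∪ acc k) := by
          rw [← Set.union_iUnion, haccU]
        show (μ ((w : Set X) ∪ bigU)).toReal ≤ t
        rw [hUeq]
        refine toReal_measure_iUnion_le μ (fun k => w.2.union (haccm k))
          (fun i j hij => Set.union_subset_union_right _ (Set.monotone_accumulate hij)) ht0 ?_
        intro k
        rw [← mval_mk μ ⟨(w : Set X) ∪ acc k, w.2.union (haccm k)⟩]
        rw [mk_union μ w.2 (haccm k)]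
        rw [show (⟨(w : Set X), w.2⟩ : MSet X) = w from Subtype.ext rfl, hw, haccmk k]
        refine le_csSup hTbdd ⟨c ⊔ z k, ?_, rfl⟩
        exact hJsup c ⟨{c}, by simpa using hc, by simp⟩ _ (hzJ k)
      exact (eq_of_le_of_mval_le μ hle (le_trans this hmval_ge)).symm
    calc c ≤ c ⊔ m := le_sup_left
      _ = m := hcm
  · -- least
    intro u hu
    obtain ⟨w, hw⟩ := mk_surjective μ u
    rw [← hw, hm, mk_le_mk_iff]
    have : bigU \ (w : Set X) = ⋃ k, (gs k \ (w : Set X)) := Set.iUnion_diff _ _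
    rw [this]
    refine measure_iUnion_null fun k => ?_
    have : z k ≤ u := hJle u hu _ (hzJ k)
    rw [← hg k, ← hw, mk_le_mk_iff] at this
    exact this

end MAlgAux
/-! ### Sikorski-style extension of partial Boolean homomorphisms -/

namespace Sikorski

variable {A : Type u} {B : Type v} [BooleanAlgebra A] [BooleanAlgebra B]

/-- A "partial homomorphism", given as a functional graph closed under the operations. -/
def IsPH (G : Set (A × B)) : Prop :=
  (∀ p ∈ G, ∀ q ∈ G, p.1 = q.1 → p.2 = q.2) ∧
  ((⊥, ⊥) : A × B) ∈ G ∧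
  (∀ p ∈ G, (p.1ᶜ, p.2ᶜ) ∈ G) ∧
  (∀ p ∈ G, ∀ q ∈ G, (p.1 ⊔ q.1, p.2 ⊔ q.2) ∈ G)

namespace IsPH

variable {G : Set (A × B)}

lemma top_mem (hG : IsPH G) : ((⊤, ⊤) : A × B) ∈ G := by
  have := hG.2.2.1 _ hG.2.1
  simpa using this

lemma inf_mem (hG : IsPH G) {p q : A × B} (hp : p ∈ G) (hq : q ∈ G) : (p.1 ⊓ q.1, p.2 ⊓ q.2) ∈ G := by
  have := hG.2.2.1 _ (hG.2.2.2 _ (hG.2.2.1 _ hp) _ (hG.2.2.1 _ hq))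
  simpa [compl_sup] using this

lemma symmDiff_mem (hG : IsPH G) {p q : A × B} (hp : p ∈ G) (hq : q ∈ G) :
    (p.1 ∆ q.1, p.2 ∆ q.2) ∈ G := by
  have h1 := hG.inf_mem hp (hG.2.2.1 _ hq)
  have h2 := hG.inf_mem hq (hG.2.2.1 _ hp)
  have := hG.2.2.2 _ h1 _ h2
  rw [symmDiff_def, symmDiff_def, _root_.sdiff_eq, _root_.sdiff_eq, _root_.sdiff_eq,
    _root_.sdiff_eq]
  exact this

lemma mono (hG : IsPH G) {c c' : A} {v v' : B} (h : (c, v) ∈ G) (h' : (c', v') ∈ G) (hcc : c ≤ c') :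
    v ≤ v' := by
  have hs := hG.2.2.2 _ h _ h'
  have h1 : ((c ⊔ c', v ⊔ v') : A × B).1 = ((c', v') : A × B).1 := sup_eq_right.2 hcc
  have := hG.1 _ hs _ h' h1
  exact sup_eq_right.1 this

end IsPH

section identities

variable (x y x' y' a : A)

lemma combo_self : (x ⊓ a) ⊔ (x ⊓ aᶜ) = x := by rw [← inf_sup_left]; simp

lemma combo_inf_a : ((x ⊓ a) ⊔ (y ⊓ aᶜ)) ⊓ a = x ⊓ a := by
  rw [inf_sup_right, inf_assoc, inf_assoc]
  simp

lemma combo_inf_ac : ((x ⊓ a) ⊔ (y ⊓ aᶜ)) ⊓ aᶜ = y ⊓ aᶜ := by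
  rw [inf_sup_right, inf_assoc, inf_assoc]
  simp

lemma combo_sup : ((x ⊓ a) ⊔ (y ⊓ aᶜ)) ⊔ ((x' ⊓ a) ⊔ (y' ⊓ aᶜ))
    = ((x ⊔ x') ⊓ a) ⊔ ((y ⊔ y') ⊓ aᶜ) := by
  rw [sup_sup_sup_comm, ← inf_sup_right, ← inf_sup_right]

lemma combo_compl : ((x ⊓ a) ⊔ (y ⊓ aᶜ))ᶜ = (xᶜ ⊓ a) ⊔ (yᶜ ⊓ aᶜ) := by
  refine (IsCompl.of_eq ?_ ?_).compl_eq
  · rw [inf_sup_left]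
    refine le_bot_iff.1 (sup_le ?_ ?_)
    · calc ((x ⊓ a) ⊔ (y ⊓ aᶜ)) ⊓ (xᶜ ⊓ a) = (((x ⊓ a) ⊔ (y ⊓ aᶜ)) ⊓ a) ⊓ xᶜ := by
            rw [inf_comm xᶜ a, ← inf_assoc]
        _ = (x ⊓ a) ⊓ xᶜ := by rw [combo_inf_a]
        _ ≤ x ⊓ xᶜ := inf_le_inf_right _ inf_le_left
        _ = ⊥ := by simp
    · calc ((x ⊓ a) ⊔ (y ⊓ aᶜ)) ⊓ (yᶜ ⊓ aᶜ) = (((x ⊓ a) ⊔ (y ⊓ aᶜ)) ⊓ aᶜ) ⊓ yᶜ := by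
            rw [inf_comm yᶜ aᶜ, ← inf_assoc]
        _ = (y ⊓ aᶜ) ⊓ yᶜ := by rw [combo_inf_ac]
        _ ≤ y ⊓ yᶜ := inf_le_inf_right _ inf_le_left
        _ = ⊥ := by simp
  · rw [combo_sup]
    simp

end identities

theorem exists_total (hLUB : ∀ S : Set B, ∃ m, IsLUB S m)
    (G₀ : Set (A × B)) (h₀ : IsPH G₀) :
    ∃ G : Set (A × B), IsPH G ∧ G₀ ⊆ G ∧ ∀ a : A, ∃ b : B, (a, b) ∈ G := by
  classical
  set S : Set (Set (A × B)) := {G | IsPH G ∧ G₀ ⊆ G} with hS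
  have hchain : ∀ c ⊆ S, IsChain (fun x1 x2 => x1 ⊆ x2) c → c.Nonempty →
      ∃ ub ∈ S, ∀ s ∈ c, s ⊆ ub := by
    intro c hcS hc ⟨G1, hG1⟩
    refine ⟨⋃₀ c, ⟨⟨?_, ?_, ?_, ?_⟩, ?_⟩, fun s hs => Set.subset_sUnion_of_mem hs⟩
    · rintro p ⟨Gp, hGp, hpGp⟩ q ⟨Gq, hGq, hqGq⟩ hpq
      rcases hc.total hGp hGq with h | h
      · exact (hcS hGq).1.1 _ (h hpGp) _ hqGq hpq
      · exact (hcS hGp).1.1 _ hpGp _ (h hqGq) hpq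
    · exact ⟨G1, hG1, (hcS hG1).1.2.1⟩
    · rintro p ⟨Gp, hGp, hpGp⟩
      exact ⟨Gp, hGp, (hcS hGp).1.2.2.1 _ hpGp⟩
    · rintro p ⟨Gp, hGp, hpGp⟩ q ⟨Gq, hGq, hqGq⟩
      rcases hc.total hGp hGq with h | h
      · exact ⟨Gq, hGq, (hcS hGq).1.2.2.2 _ (h hpGp) _ hqGq⟩
      · exact ⟨Gp, hGp, (hcS hGp).1.2.2.2 _ hpGp _ (h hqGq)⟩
    · exact le_trans (subset_rfl.trans ((hcS hG1).2)) (Set.subset_sUnion_of_mem hG1)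
  obtain ⟨G, hG₀G, hGmax⟩ := zorn_subset_nonempty S hchain G₀ ⟨h₀, subset_rfl⟩
  obtain ⟨hGPH, hG₀G'⟩ := hGmax.prop
  refine ⟨G, hGPH, hG₀G, ?_⟩
  by_contra hcon
  push_neg at hcon
  obtain ⟨a, ha⟩ := hcon
  -- the least upper bound of the images of elements below `a`
  set Da : Set B := {v | ∃ c, ((c, v) : A × B) ∈ G ∧ c ≤ a} with hDa
  obtain ⟨m, hm⟩ := hLUB Da
  have h_lo : ∀ c v, ((c, v) : A × B) ∈ G → c ≤ a → v ≤ m := fun c v hcv hca =>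
    hm.1 ⟨c, hcv, hca⟩
  have h_up : ∀ c v, ((c, v) : A × B) ∈ G → a ≤ c → m ≤ v := by
    intro c v hcv hac
    refine hm.2 ?_
    rintro w ⟨cw, hw, hwa⟩
    exact hGPH.mono hw hcv (hwa.trans hac)
  -- the extended graph
  set G' : Set (A × B) := {p | ∃ x gx y gy, ((x, gx) : A × B) ∈ G ∧ ((y, gy) : A × B) ∈ G ∧
    p = ((x ⊓ a) ⊔ (y ⊓ aᶜ), (gx ⊓ m) ⊔ (gy ⊓ mᶜ))} with hG'
  have hGG' : G ⊆ G' := by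
    rintro ⟨c, v⟩ hcv
    exact ⟨c, v, c, v, hcv, hcv, by rw [combo_self, combo_self]⟩
  have haG' : ((a, m) : A × B) ∈ G' := by
    refine ⟨⊤, ⊤, ⊥, ⊥, hGPH.top_mem, hGPH.2.1, ?_⟩
    simp
  have hG'PH : IsPH G' := by
    refine ⟨?_, ?_, ?_, ?_⟩
    · -- functionality
      rintro p ⟨x, gx, y, gy, hx, hy, rfl⟩ q ⟨x', gx', y', gy', hx', hy', rfl⟩ h1
      simp only at h1 ⊢
      have hxa : x ⊓ a = x' ⊓ a := by
        have := congrArg (· ⊓ a) h1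
        simpa [combo_inf_a] using this
      have hyac : y ⊓ aᶜ = y' ⊓ aᶜ := by
        have := congrArg (· ⊓ aᶜ) h1
        simpa [combo_inf_ac] using this
      -- x-side
      have hdmem := hGPH.symmDiff_mem hx hx'
      have hd : (x ∆ x') ⊓ a = ⊥ := by
        rw [inf_symmDiff_distrib_right, hxa, symmDiff_self]
      have hadc : a ≤ (x ∆ x')ᶜ := by
        rw [le_compl_iff_disjoint_right, disjoint_iff, inf_comm]
        exact hd
      have hdcmem := hGPH.2.2.1 _ hdmem
      have hmle : m ≤ (gx ∆ gx')ᶜ := h_up _ _ hdcmem hadc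
      have hgxm : gx ⊓ m = gx' ⊓ m := by
        refine symmDiff_eq_bot.1 ?_
        rw [← inf_symmDiff_distrib_right]
        refine le_bot_iff.1 ?_
        calc (gx ∆ gx') ⊓ m ≤ (gx ∆ gx') ⊓ (gx ∆ gx')ᶜ := inf_le_inf_left _ hmle
          _ = ⊥ := inf_compl_eq_bot
      -- y-side
      have hd'mem := hGPH.symmDiff_mem hy hy'
      have hd' : (y ∆ y') ⊓ aᶜ = ⊥ := by
        rw [inf_symmDiff_distrib_right, hyac, symmDiff_self]
      have hd'a : y ∆ y' ≤ a := by
        have : y ∆ y' ≤ aᶜᶜ := by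
          rw [le_compl_iff_disjoint_right, disjoint_iff]
          exact hd'
        simpa using this
      have hgym' : gy ∆ gy' ≤ m := h_lo _ _ hd'mem hd'a
      have hgym : gy ⊓ mᶜ = gy' ⊓ mᶜ := by
        refine symmDiff_eq_bot.1 ?_
        rw [← inf_symmDiff_distrib_right]
        refine le_bot_iff.1 ?_
        calc (gy ∆ gy') ⊓ mᶜ ≤ m ⊓ mᶜ := inf_le_inf_right _ hgym'
          _ = ⊥ := inf_compl_eq_bot
      rw [hgxm, hgym]
    · exact ⟨⊥, ⊥, ⊥, ⊥, hGPH.2.1, hGPH.2.1, by simp⟩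
    · rintro p ⟨x, gx, y, gy, hx, hy, rfl⟩
      exact ⟨xᶜ, gxᶜ, yᶜ, gyᶜ, hGPH.2.2.1 _ hx, hGPH.2.2.1 _ hy, by
        simp only [combo_compl]⟩
    · rintro p ⟨x, gx, y, gy, hx, hy, rfl⟩ q ⟨x', gx', y', gy', hx', hy', rfl⟩
      exact ⟨x ⊔ x', gx ⊔ gx', y ⊔ y', gy ⊔ gy', hGPH.2.2.2 _ hx _ hx',
        hGPH.2.2.2 _ hy _ hy', by simp only [combo_sup]⟩
  have : G' ⊆ G := hGmax.2 ⟨hG'PH, hG₀G'.trans hGG'⟩ hGG'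
  exact ha m (this haG')

end Sikorski
/-! ### Homomorphisms of the measure algebra induced by measure-preserving maps -/

namespace MAlgAux

variable {X : Type u} [MeasurableSpace X] (μ : Measure X)

/-- Preimage under a measurable map, as a bounded lattice hom on measurable sets. -/
def preHom (f : X → X) (hf : Measurable f) : BoundedLatticeHom (MSet X) (MSet X) where
  toFun s := ⟨f ⁻¹' (s : Set X), hf s.2⟩
  map_sup' s t := by
    apply Subtype.ext
    simp only [MeasurableSet.sup_eq_union, MeasurableSet.coe_union, Set.preimage_union]
  map_inf' s t := by
    apply Subtype.ext
    simp only [MeasurableSet.inf_eq_inter, MeasurableSet.coe_inter, Set.preimage_inter]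
  map_top' := by
    apply Subtype.ext
    simp
  map_bot' := by
    apply Subtype.ext
    simp

/-- The endomorphism of the measure algebra induced by a measure-preserving measurable map. -/
def traHom (f : X → X) (hf : Measurable f)
    (hpre : ∀ s : Set X, MeasurableSet s → μ (f ⁻¹' s) = μ s) :
    BoundedLatticeHom (MAlg X μ) (MAlg X μ) :=
  (Ideal.Quotient.lift (nullIdeal μ)
    ((Ideal.Quotient.mk (nullIdeal μ)).comp ((preHom f hf).asBoolRing))
    (by
      intro r hr
      rw [RingHom.comp_apply, Ideal.Quotient.eq_zero_iff_mem]
      show μ ((ofBoolRing ((preHom f hf).asBoolRing r) : MSet X) : Set X) = 0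
      show μ ((ofBoolRing (toBoolRing (preHom f hf (ofBoolRing r))) : MSet X) : Set X) = 0
      rw [ofBoolRing_toBoolRing]
      show μ (f ⁻¹' ((ofBoolRing r : MSet X) : Set X)) = 0
      rw [hpre _ (ofBoolRing r : MSet X).2]
      exact hr)).asBoolAlg

lemma traHom_mk (f : X → X) (hf : Measurable f)
    (hpre : ∀ s : Set X, MeasurableSet s → μ (f ⁻¹' s) = μ s) (s : MSet X) :
    traHom μ f hf hpre (MAlg.mk μ s) = MAlg.mk μ ⟨f ⁻¹' (s : Set X), hf s.2⟩ :=
  rfl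

end MAlgAux

/-! ### The Cantor cube: specific facts -/

namespace CubeAux

open MAlgAux

instance : (lam ℕ).IsAddLeftInvariant := Measure.isAddLeftInvariant_addHaarMeasure _
instance : (lam ℕ).Regular := Measure.regular_addHaarMeasure

lemma lam_univ : lam ℕ Set.univ = 1 := Measure.addHaarMeasure_self

instance : IsProbabilityMeasure (lam ℕ) := ⟨lam_univ⟩

lemma two_add_self (a : Two) : a + a = 0 := by cases a <;> rfl

/-- The vector flipping the `n`-th coordinate. -/
def cvec (n : ℕ) : Cube ℕ := Pi.single n 1

/-- The translation by `cvec n` (flip of the `n`-th coordinate). -/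
def tra (n : ℕ) : Cube ℕ → Cube ℕ := fun x => cvec n + x

lemma tra_measurable (n : ℕ) : Measurable (tra n) := measurable_const_add _

lemma tra_pre (n : ℕ) (s : Set (Cube ℕ)) (_ : MeasurableSet s) :
    lam ℕ (tra n ⁻¹' s) = lam ℕ s :=
  measure_preimage_add _ _ _

lemma tra_invol (n : ℕ) (z : Cube ℕ) : tra n (tra n z) = z := by
  funext i
  show cvec n i + (cvec n i + z i) = z i
  rw [← add_assoc, two_add_self, zero_add]

/-- The coordinate-flip endomorphism of the measure algebra. -/
def sigma (n : ℕ) : BoundedLatticeHom (MAlg (Cube ℕ) (lam ℕ)) (MAlg (Cube ℕ) (lam ℕ)) :=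
  traHom (lam ℕ) (tra n) (tra_measurable n) (tra_pre n)

lemma sigma_mk (n : ℕ) (s : MSet (Cube ℕ)) :
    sigma n (MAlg.mk (lam ℕ) s)
      = MAlg.mk (lam ℕ) ⟨tra n ⁻¹' (s : Set (Cube ℕ)), (tra_measurable n) s.2⟩ :=
  traHom_mk _ _ _ _ s

lemma cvec_same (n : ℕ) : cvec n n = 1 := by
  unfold cvec
  simp

/-- Every clopen set is eventually invariant under coordinate flips. -/
lemma clopen_eventually_invariant {C : Set (Cube ℕ)} (hC : IsClopen C) :
    ∃ N : ℕ, ∀ n ≥ N, tra n ⁻¹' C = C := by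
  classical
  have hcyl : ∀ x ∈ C, ∃ I : Finset ℕ, {y : Cube ℕ | ∀ i ∈ I, y i = x i} ⊆ C := by
    intro x hx
    obtain ⟨I, u, hu, hsub⟩ := (isOpen_pi_iff.1 hC.2) x hx
    refine ⟨I, fun y hy => hsub ?_⟩
    intro i hi
    rw [Set.mem_setOf_eq] at hy
    rw [hy i hi]
    exact (hu i hi).2
  choose! I hI using hcyl
  set W : Cube ℕ → Set (Cube ℕ) := fun x => {y | ∀ i ∈ I x, y i = x i} with hW
  have hWopen : ∀ x, IsOpen (W x) := by
    intro x
    have : W x = (↑(I x) : Set ℕ).pi (fun i => {x i}) := by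
      ext y
      simp [hW, Set.mem_pi]
    rw [this]
    exact isOpen_set_pi (Finset.finite_toSet _) (fun a _ => isOpen_discrete _)
  have hcover : C ⊆ ⋃ x ∈ C, W x := by
    intro x hx
    exact Set.mem_biUnion hx (fun i _ => rfl)
  obtain ⟨T, hTsub, hTfin, hTcover⟩ :=
    hC.isClosed.isCompact.elim_finite_subcover_image (fun x _ => hWopen x) hcover
  set bound : ℕ := hTfin.toFinset.sup (fun x => (I x).sup id) with hbound
  refine ⟨bound + 1, fun n hn => ?_⟩
  have hnot : ∀ x ∈ T, n ∉ I x := by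
    intro x hxT hmem
    have h1 : id n ≤ (I x).sup id := Finset.le_sup hmem
    have h2 : (I x).sup id ≤ bound :=
      Finset.le_sup (f := fun x => (I x).sup id) (hTfin.mem_toFinset.2 hxT)
    simp only [id] at h1
    omega
  have key : ∀ z ∈ C, tra n z ∈ C := by
    intro z hz
    obtain ⟨x, hxT, hzW⟩ : ∃ x ∈ T, z ∈ W x := by
      have := hTcover hz
      simpa using this
    refine hI x (hTsub hxT) ?_
    intro i hi
    have hin : i ≠ n := fun h => hnot x hxT (h ▸ hi)
    show (cvec n + z) i = x i
    rw [Pi.add_apply]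
    have hc : cvec n i = 0 := Pi.single_eq_of_ne hin 1
    rw [hc, zero_add]
    exact hzW i hi
  ext z
  constructor
  · intro hz
    have h1 := key _ hz
    rwa [tra_invol] at h1
  · intro hz
    exact key z hz

/-- Approximation of measurable sets by clopen sets. -/
lemma exists_clopen_approx (s : Set (Cube ℕ)) (hs : MeasurableSet s) {δ : ℝ≥0∞} (hδ : δ ≠ 0) :
    ∃ C : Set (Cube ℕ), IsClopen C ∧ lam ℕ (s ∆ C) < δ := by
  classical
  have h2 : δ / 2 ≠ 0 := by
    intro h
    rcases ENNReal.div_eq_zero_iff.1 h with h' | h'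
    · exact hδ h'
    · exact ENNReal.ofNat_ne_top h'
  obtain ⟨U, hsU, hUopen, _, hU⟩ := MeasurableSet.exists_isOpen_diff_lt (μ := lam ℕ) hs (measure_ne_top _ _) h2
  obtain ⟨V, hscV, hVopen, _, hV⟩ := MeasurableSet.exists_isOpen_diff_lt (μ := lam ℕ) hs.compl (measure_ne_top _ _) h2
  set K : Set (Cube ℕ) := Vᶜ with hK
  have hKcomp : IsCompact K := hVopen.isClosed_compl.isCompact
  have hKs : K ⊆ s := by
    intro x hx
    by_contra hxs
    exact hx (hscV hxs)
  have hKU : K ⊆ U := hKs.trans hsU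
  have hWex : ∀ x ∈ K, ∃ Wx : Set (Cube ℕ), IsClopen Wx ∧ x ∈ Wx ∧ Wx ⊆ U := fun x hx =>
    compact_exists_isClopen_in_isOpen hUopen (hKU hx)
  choose! W hW1 hW2 hW3 using hWex
  obtain ⟨T, hTsub, hTfin, hTcover⟩ :=
    hKcomp.elim_finite_subcover_image (fun x hx => (hW1 x hx).2)
      (fun x hx => Set.mem_biUnion hx (hW2 x hx))
  set C : Set (Cube ℕ) := ⋃ x ∈ T, W x with hC
  have hCclopen : IsClopen C := hTfin.isClopen_biUnion (fun x hx => hW1 x (hTsub hx))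
  have hCU : C ⊆ U := Set.iUnion₂_subset fun x hx => hW3 x (hTsub hx)
  refine ⟨C, hCclopen, ?_⟩
  have hsub : s ∆ C ⊆ (V \ sᶜ) ∪ (U \ s) := by
    intro x hx
    rcases Set.mem_symmDiff.1 hx with ⟨hxs, hxC⟩ | ⟨hxC, hxs⟩
    · left
      constructor
      · by_contra hxV
        exact hxC (hTcover (show x ∈ K from hxV))
      · simp [hxs]
    · exact Or.inr ⟨hCU hxC, hxs⟩
  calc lam ℕ (s ∆ C) ≤ lam ℕ (V \ sᶜ) + lam ℕ (U \ s) :=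
        le_trans (measure_mono hsub) (measure_union_le _ _)
    _ < δ / 2 + δ / 2 := ENNReal.add_lt_add hV hU
    _ = δ := ENNReal.add_halves δ

/-- Pointwise convergence of the flips to the identity on the measure algebra. -/
lemma tendsto_sigma (x : MAlg (Cube ℕ) (lam ℕ)) :
    Filter.Tendsto (fun n : ℕ => mval (lam ℕ) (sigma n x ∆ x)) Filter.atTop (nhds (0 : ℝ)) := by
  obtain ⟨s, rfl⟩ := mk_surjective (lam ℕ) x
  rw [Metric.tendsto_atTop]
  intro ε hε
  have hδ : ENNReal.ofReal (ε / 3) ≠ 0 := by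
    simp only [ne_eq, ENNReal.ofReal_eq_zero, not_le]
    linarith
  obtain ⟨C, hCclopen, hCapprox⟩ := exists_clopen_approx (s : Set (Cube ℕ)) s.2 hδ
  obtain ⟨N, hN⟩ := clopen_eventually_invariant hCclopen
  refine ⟨N, fun n hn => ?_⟩
  have hval : mval (lam ℕ) (sigma n (MAlg.mk (lam ℕ) s) ∆ MAlg.mk (lam ℕ) s)
      = (lam ℕ ((tra n ⁻¹' (s : Set (Cube ℕ))) ∆ (s : Set (Cube ℕ)))).toReal := by
    rw [sigma_mk, ← mk_symmDiff, mval_mk, coe_symmDiff]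
  have hbound : lam ℕ ((tra n ⁻¹' (s : Set (Cube ℕ))) ∆ (s : Set (Cube ℕ)))
      ≤ ENNReal.ofReal (ε / 3) + ENNReal.ofReal (ε / 3) := by
    have htri : (tra n ⁻¹' (s : Set (Cube ℕ))) ∆ (s : Set (Cube ℕ))
        ⊆ ((tra n ⁻¹' (s : Set (Cube ℕ))) ∆ (tra n ⁻¹' C)) ∪ ((tra n ⁻¹' C) ∆ (s : Set (Cube ℕ))) :=
      symmDiff_triangle _ _ _
    have hCinv : tra n ⁻¹' C = C := hN n hn
    calc lam ℕ ((tra n ⁻¹' (s : Set (Cube ℕ))) ∆ (s : Set (Cube ℕ)))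
        ≤ lam ℕ ((tra n ⁻¹' (s : Set (Cube ℕ))) ∆ (tra n ⁻¹' C))
          + lam ℕ ((tra n ⁻¹' C) ∆ (s : Set (Cube ℕ))) :=
          le_trans (measure_mono htri) (measure_union_le _ _)
      _ = lam ℕ ((s : Set (Cube ℕ)) ∆ C) + lam ℕ ((s : Set (Cube ℕ)) ∆ C) := by
          rw [← Set.preimage_symmDiff, tra_pre n _ (s.2.symmDiff hCclopen.2.measurableSet),
            hCinv, symmDiff_comm]
      _ ≤ ENNReal.ofReal (ε / 3) + ENNReal.ofReal (ε / 3) :=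
          add_le_add hCapprox.le hCapprox.le
  have htoReal : (lam ℕ ((tra n ⁻¹' (s : Set (Cube ℕ))) ∆ (s : Set (Cube ℕ)))).toReal
      ≤ 2 * ε / 3 := by
    refine ENNReal.toReal_le_of_le_ofReal (by linarith) ?_
    rw [← ENNReal.ofReal_add (by linarith) (by linarith)] at hbound
    calc lam ℕ _ ≤ ENNReal.ofReal (ε / 3 + ε / 3) := hbound
      _ = ENNReal.ofReal (2 * ε / 3) := by ring_nf
  rw [Real.dist_eq, sub_zero, abs_of_nonneg (by rw [hval]; exact ENNReal.toReal_nonneg), hval]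
  linarith

end CubeAux
/-- If a Boolean algebra contains a copy of the Cantor algebra (the clopen algebra of
`2^ω`), then there is a sequence of Boolean homomorphisms into the measure algebra `M`
converging pointwise but not uniformly. -/
theorem nontrivial_convergence_of_homomorphisms_of_algebra_containing_cantor
    {A : Type u} [BooleanAlgebra A]
    (e : BoundedLatticeHom (TopologicalSpace.Clopens (Cube ℕ)) A)
    (he : Function.Injective e) :
    ∃ (φn : ℕ → BoundedLatticeHom A (MAlg (Cube ℕ) (lam ℕ)))
      (φ : BoundedLatticeHom A (MAlg (Cube ℕ) (lam ℕ))),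
      (∀ a : A, Filter.Tendsto (fun n : ℕ => mval (lam ℕ) (φn n a ∆ φ a))
        Filter.atTop (nhds (0 : ℝ))) ∧
      ¬ (∀ ε : ℝ, 0 < ε → ∃ N : ℕ, ∀ n > N, ∀ a : A,
          mval (lam ℕ) (φn n a ∆ φ a) < ε) := by
  classical
  -- the canonical image of a clopen set in the measure algebra
  set mkc : TopologicalSpace.Clopens (Cube ℕ) → MAlg (Cube ℕ) (lam ℕ) :=
    fun U => MAlg.mk (lam ℕ) ⟨(U : Set (Cube ℕ)), U.isClopen.isOpen.measurableSet⟩ with hmkc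
  have hmkc_bot : mkc ⊥ = ⊥ := by
    have h1 : (⟨((⊥ : TopologicalSpace.Clopens (Cube ℕ)) : Set (Cube ℕ)),
        (⊥ : TopologicalSpace.Clopens (Cube ℕ)).isClopen.isOpen.measurableSet⟩ : MSet (Cube ℕ))
        = (⊥ : MSet (Cube ℕ)) := Subtype.ext (by simp)
    exact (congrArg (MAlg.mk (lam ℕ)) h1).trans (MAlgAux.mk_bot _)
  have hmkc_compl : ∀ U : TopologicalSpace.Clopens (Cube ℕ), mkc Uᶜ = (mkc U)ᶜ := by
    intro U
    have h1 : (⟨((Uᶜ : TopologicalSpace.Clopens (Cube ℕ)) : Set (Cube ℕ)),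
        (Uᶜ : TopologicalSpace.Clopens (Cube ℕ)).isClopen.isOpen.measurableSet⟩ : MSet (Cube ℕ))
        = (⟨(U : Set (Cube ℕ)), U.isClopen.isOpen.measurableSet⟩ : MSet (Cube ℕ))ᶜ :=
      Subtype.ext (by simp)
    exact (congrArg (MAlg.mk (lam ℕ)) h1).trans (MAlgAux.mk_compl _ _)
  have hmkc_sup : ∀ U V : TopologicalSpace.Clopens (Cube ℕ), mkc (U ⊔ V) = mkc U ⊔ mkc V := by
    intro U V
    have h1 : (⟨((U ⊔ V : TopologicalSpace.Clopens (Cube ℕ)) : Set (Cube ℕ)),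
        (U ⊔ V : TopologicalSpace.Clopens (Cube ℕ)).isClopen.isOpen.measurableSet⟩ : MSet (Cube ℕ))
        = (⟨(U : Set (Cube ℕ)), U.isClopen.isOpen.measurableSet⟩ : MSet (Cube ℕ))
          ⊔ (⟨(V : Set (Cube ℕ)), V.isClopen.isOpen.measurableSet⟩ : MSet (Cube ℕ)) :=
      Subtype.ext (by simp)
    exact (congrArg (MAlg.mk (lam ℕ)) h1).trans (MAlgAux.mk_sup _ _ _)
  -- the partial homomorphism on the copy of the Cantor algebra
  set G₀ : Set (A × MAlg (Cube ℕ) (lam ℕ)) :=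
    {p | ∃ U : TopologicalSpace.Clopens (Cube ℕ), p = (e U, mkc U)} with hG₀
  have h₀ : Sikorski.IsPH G₀ := by
    refine ⟨?_, ?_, ?_, ?_⟩
    · rintro p ⟨U, rfl⟩ q ⟨V, rfl⟩ h
      simp only at h ⊢
      rw [he h]
    · refine ⟨⊥, ?_⟩
      rw [BotHomClass.map_bot e, hmkc_bot]
    · rintro p ⟨U, rfl⟩
      refine ⟨Uᶜ, ?_⟩
      rw [map_compl' e, hmkc_compl]
    · rintro p ⟨U, rfl⟩ q ⟨V, rfl⟩
      refine ⟨U ⊔ V, ?_⟩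
      rw [SupHomClass.map_sup e, hmkc_sup]
  obtain ⟨G, hGPH, hG₀G, hGtot⟩ :=
    Sikorski.exists_total (MAlgAux.exists_isLUB (lam ℕ)) G₀ h₀
  choose φ₀ hφ₀ using hGtot
  -- the homomorphism extending `mkc ∘ e⁻¹`
  set φ : BoundedLatticeHom A (MAlg (Cube ℕ) (lam ℕ)) :=
    { toFun := φ₀
      map_sup' := fun a b =>
        hGPH.1 _ (hφ₀ (a ⊔ b)) _ (hGPH.2.2.2 _ (hφ₀ a) _ (hφ₀ b)) rfl
      map_inf' := fun a b =>
        hGPH.1 _ (hφ₀ (a ⊓ b)) _ (hGPH.inf_mem (hφ₀ a) (hφ₀ b)) rfl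
      map_top' := hGPH.1 _ (hφ₀ ⊤) _ hGPH.top_mem rfl
      map_bot' := hGPH.1 _ (hφ₀ ⊥) _ hGPH.2.1 rfl } with hφ
  have hφe : ∀ U : TopologicalSpace.Clopens (Cube ℕ), φ (e U) = mkc U := fun U =>
    hGPH.1 _ (hφ₀ (e U)) _ (hG₀G ⟨U, rfl⟩) rfl
  refine ⟨fun n => (CubeAux.sigma n).comp φ, φ, ?_, ?_⟩
  · intro a
    have h := CubeAux.tendsto_sigma (φ a)
    simpa using h
  · intro hcon
    obtain ⟨N, hN⟩ := hcon 1 one_pos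
    set n : ℕ := N + 1 with hn
    set U : TopologicalSpace.Clopens (Cube ℕ) := ⟨{x : Cube ℕ | x n = 1},
      (isClopen_discrete {(1 : Two)}).preimage (continuous_apply n)⟩ with hU
    have hval : mval (lam ℕ) (((CubeAux.sigma n).comp φ) (e U) ∆ φ (e U)) = 1 := by
      have h1 : ((CubeAux.sigma n).comp φ) (e U) = CubeAux.sigma n (mkc U) := by
        simp [BoundedLatticeHom.comp_apply, hφe]
      have hmkcU : mkc U = MAlg.mk (lam ℕ)
          ⟨(U : Set (Cube ℕ)), U.isClopen.isOpen.measurableSet⟩ := rfl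
      rw [h1, hφe, hmkcU, CubeAux.sigma_mk, ← MAlgAux.mk_symmDiff, MAlgAux.mval_mk,
        MAlgAux.coe_symmDiff]
      have hpre : CubeAux.tra n ⁻¹' (U : Set (Cube ℕ)) = {x : Cube ℕ | x n = 0} := by
        ext x
        show (CubeAux.cvec n + x) n = 1 ↔ x n = 0
        rw [Pi.add_apply]
        rw [CubeAux.cvec_same]
        cases hx : x n <;> decide
      have hUcoe : (U : Set (Cube ℕ)) = {x : Cube ℕ | x n = 1} := rfl
      show ((lam ℕ) ((CubeAux.tra n ⁻¹' (U : Set (Cube ℕ))) ∆ (U : Set (Cube ℕ)))).toReal = 1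
      rw [hpre, hUcoe]
      have hsymm : ({x : Cube ℕ | x n = 0} : Set (Cube ℕ)) ∆ {x : Cube ℕ | x n = 1}
          = Set.univ := by
        ext x
        simp only [Set.mem_symmDiff, Set.mem_setOf_eq, Set.mem_univ, iff_true]
        cases hx : x n
        · exact Or.inl ⟨by decide, by decide⟩
        · exact Or.inr ⟨by decide, by decide⟩
      rw [hsymm, CubeAux.lam_univ, ENNReal.toReal_one]
    have hcontr := hN n (Nat.lt_succ_self N) (e U)
    rw [hval] at hcontr
    exact absurd hcontr (lt_irrefl 1)
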